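/- Let R be a ring and S a multiplicatively closed subset of R consisting of central regular (non-zero-divisor) elements. Then the prime radical of the localization S^{-1}R equals { u^{-1}a : u ∈ S, a ∈ P(R) }. -/

import Mathlib

/-- A (two-sided) ideal `P` of a ring is prime if it is proper and for all `a b`,
`a R b ⊆ P` implies `a ∈ P` or `b ∈ P`. -/
def IsPrimeTwoSided {R : Type*} [Ring R] (P : TwoSidedIdeal R) : Prop :=
  P ≠ ⊤ ∧ ∀ a b : R, (∀ r : R, a * r * b ∈ P) → a ∈ P ∨ b ∈ P

/-- The prime radical `P(R)`: the intersection of all prime (two-sided) ideals of `R`. -/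
def primeRadical (R : Type*) [Ring R] : Set R :=
  {x | ∀ P : TwoSidedIdeal R, IsPrimeTwoSided P → x ∈ P}

/-- A ring `R` is `P`-symmetric if `a * b * c = 0` implies `b * a * c ∈ P(R)`. -/
def IsPSymmetric (R : Type*) [Ring R] : Prop :=
  ∀ a b c : R, a * b * c = 0 → b * a * c ∈ primeRadical R

section SN

variable {R : Type*} [Ring R]

/-- Strong nilpotence: every m-sequence starting at `a` eventually hits `0`. -/
def SNil (a : R) : Prop :=
  ∀ f : ℕ → R, f 0 = a → (∀ n, ∃ r, f (n + 1) = f n * r * f n) → ∃ n, f n = 0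

lemma snil_mem_primeRadical {a : R} (h : SNil a) : a ∈ primeRadical R := by
  intro P hP
  by_contra ha
  have key : ∀ x : R, x ∉ P → ∃ r, x * r * x ∉ P := by
    intro x hx
    by_contra hcon
    push_neg at hcon
    rcases hP.2 x x hcon with h' | h' <;> exact hx h'
  choose r hr using key
  let f : ℕ → {x : R // x ∉ P} := fun n =>
    Nat.rec ⟨a, ha⟩ (fun _ p => ⟨p.1 * r p.1 p.2 * p.1, hr p.1 p.2⟩) n
  obtain ⟨n, hn⟩ := h (fun n => (f n).1) rfl (fun n => ⟨r (f n).1 (f n).2, rfl⟩)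
  exact (f n).2 (by rw [hn]; exact P.zero_mem)

/-- The additive subgroup generated by `{u * c * v}`. -/
def Tset (c : R) : AddSubgroup R := AddSubgroup.closure {z : R | ∃ u v : R, z = u * c * v}

lemma mem_Tset_self (c : R) : c ∈ Tset c :=
  AddSubgroup.subset_closure ⟨1, 1, by simp⟩

lemma Tset_mul_left (c : R) (r : R) {x : R} (hx : x ∈ Tset c) : r * x ∈ Tset c := by
  induction hx using AddSubgroup.closure_induction with
  | mem z hz =>
    obtain ⟨u, v, rfl⟩ := hz
    exact AddSubgroup.subset_closure ⟨r * u, v, by simp [mul_assoc]⟩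
  | zero => simpa using (Tset c).zero_mem
  | add x y hx hy ihx ihy => simpa [mul_add] using (Tset c).add_mem ihx ihy
  | neg x hx ihx => simpa [mul_neg] using (Tset c).neg_mem ihx

lemma Tset_mul_right (c : R) (r : R) {x : R} (hx : x ∈ Tset c) : x * r ∈ Tset c := by
  induction hx using AddSubgroup.closure_induction with
  | mem z hz =>
    obtain ⟨u, v, rfl⟩ := hz
    exact AddSubgroup.subset_closure ⟨u, v * r, by simp [mul_assoc]⟩
  | zero => simpa using (Tset c).zero_mem
  | add x y hx hy ihx ihy => simpa [add_mul] using (Tset c).add_mem ihx ihy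
  | neg x hx ihx => simpa [neg_mul] using (Tset c).neg_mem ihx

lemma Tset_mul_mem {P : TwoSidedIdeal R} {a b : R} (hab : ∀ r : R, a * r * b ∈ P)
    {t w : R} (ht : t ∈ Tset a) (hw : w ∈ Tset b) : t * w ∈ P := by
  induction ht using AddSubgroup.closure_induction with
  | mem z hz =>
    obtain ⟨u, v, rfl⟩ := hz
    induction hw using AddSubgroup.closure_induction with
    | mem z' hz' =>
      obtain ⟨p, q, rfl⟩ := hz'
      have : u * a * v * (p * b * q) = u * (a * (v * p) * b) * q := by
        simp only [mul_assoc]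
      rw [this]
      exact P.mul_mem_right _ _ (P.mul_mem_left _ _ (hab _))
    | zero => simpa using P.zero_mem
    | add x y hx hy ihx ihy => simpa [mul_add] using P.add_mem ihx ihy
    | neg x hx ihx => simpa [mul_neg] using P.neg_mem ihx
  | zero => simpa using P.zero_mem
  | add x y hx hy ihx ihy => simpa [add_mul] using P.add_mem ihx ihy
  | neg x hx ihx => simpa [neg_mul] using P.neg_mem ihx

/-- The two-sided ideal generated by `c`. -/
def Tideal (c : R) : TwoSidedIdeal R :=
  TwoSidedIdeal.mk' (Tset c : Set R) (Tset c).zero_mem (fun hx hy => (Tset c).add_mem hx hy)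
    (fun hx => (Tset c).neg_mem hx) (fun hx => Tset_mul_left c _ hx)
    (fun hx => Tset_mul_right c _ hx)

lemma mem_Tideal_iff {c x : R} : x ∈ Tideal c ↔ x ∈ Tset c := by
  simp [Tideal, TwoSidedIdeal.mem_mk']

lemma primeRadical_snil {a : R} (h : a ∈ primeRadical R) : SNil a := by
  intro f hf0 hf
  by_contra hcon
  push_neg at hcon
  set s : Set (TwoSidedIdeal R) := {I | ∀ n, f n ∉ I} with hs
  have hbot : (⊥ : TwoSidedIdeal R) ∈ s := by
    intro n hn
    exact hcon n (by simpa using hn)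
  have hih : ∀ c ⊆ s, IsChain (· ≤ ·) c → ∀ y ∈ c, ∃ ub ∈ s, ∀ z ∈ c, z ≤ ub := by
    intro c hcs hchain y hyc
    refine ⟨TwoSidedIdeal.mk' (⋃ I ∈ c, (I : Set R)) ?_ ?_ ?_ ?_ ?_, ?_, ?_⟩
    · exact Set.mem_biUnion hyc y.zero_mem
    · rintro x z hx hz
      simp only [Set.mem_iUnion, SetLike.mem_coe] at hx hz ⊢
      obtain ⟨I, hI, hxI⟩ := hx
      obtain ⟨J, hJ, hzJ⟩ := hz
      rcases hchain.total hI hJ with hIJ | hJI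
      · exact ⟨J, hJ, J.add_mem (hIJ hxI) hzJ⟩
      · exact ⟨I, hI, I.add_mem hxI (hJI hzJ)⟩
    · rintro x hx
      simp only [Set.mem_iUnion, SetLike.mem_coe] at hx ⊢
      obtain ⟨I, hI, hxI⟩ := hx
      exact ⟨I, hI, I.neg_mem hxI⟩
    · rintro x z hz
      simp only [Set.mem_iUnion, SetLike.mem_coe] at hz ⊢
      obtain ⟨I, hI, hzI⟩ := hz
      exact ⟨I, hI, I.mul_mem_left _ _ hzI⟩
    · rintro x z hx
      simp only [Set.mem_iUnion, SetLike.mem_coe] at hx ⊢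
      obtain ⟨I, hI, hxI⟩ := hx
      exact ⟨I, hI, I.mul_mem_right _ _ hxI⟩
    · intro n hn
      rw [TwoSidedIdeal.mem_mk'] at hn
      simp only [Set.mem_iUnion, SetLike.mem_coe] at hn
      obtain ⟨I, hI, hnI⟩ := hn
      exact hcs hI n hnI
    · intro J hJ
      rw [TwoSidedIdeal.le_iff]
      intro x hx
      rw [SetLike.mem_coe, TwoSidedIdeal.mem_mk']
      exact Set.mem_biUnion hJ hx
  obtain ⟨P, -, hPmax⟩ := zorn_le_nonempty₀ s hih ⊥ hbot
  have hPs : P ∈ s := hPmax.prop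
  -- every ideal strictly containing P contains some f n
  have hstrict : ∀ c : R, c ∉ P → ∃ m, f m ∈ P ⊔ Tideal c := by
    intro c hc
    by_contra hcon2
    push_neg at hcon2
    have hmem : P ⊔ Tideal c ∈ s := hcon2
    have hle : P ⊔ Tideal c ≤ P := hPmax.le_of_ge hmem le_sup_left
    exact hc (hle (le_sup_right (a := P) (mem_Tideal_iff.mpr (mem_Tset_self c))))
  -- f is eventually in any ideal containing some f m
  have hmono : ∀ (I : TwoSidedIdeal R) (m n : ℕ), m ≤ n → f m ∈ I → f n ∈ I := by
    intro I m n hmn hm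
    induction n with
    | zero => simpa [Nat.le_zero.mp hmn] using hm
    | succ n ih =>
      rcases Nat.lt_or_ge m (n + 1) with h' | h'
      · obtain ⟨r, hr⟩ := hf n
        have := ih (Nat.lt_succ_iff.mp h')
        rw [hr]
        exact I.mul_mem_left _ _ this
      · have : m = n + 1 := le_antisymm hmn h'
        rwa [← this]
  have hprime : IsPrimeTwoSided P := by
    constructor
    · intro htop
      exact hPs 0 (htop ▸ TwoSidedIdeal.mem_top _)
    · intro x y hxy
      by_contra hcon3
      push_neg at hcon3
      obtain ⟨m, hm⟩ := hstrict x hcon3.1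
      obtain ⟨k, hk⟩ := hstrict y hcon3.2
      set n := max m k
      have hnx : f n ∈ P ⊔ Tideal x := hmono _ m n (le_max_left m k) hm
      have hny : f n ∈ P ⊔ Tideal y := hmono _ k n (le_max_right m k) hk
      obtain ⟨r, hr⟩ := hf n
      obtain ⟨p, hp, t, ht, hpt⟩ := TwoSidedIdeal.mem_sup.mp hnx
      obtain ⟨q, hq, w, hw, hqw⟩ := TwoSidedIdeal.mem_sup.mp hny
      rw [mem_Tideal_iff] at ht hw
      have hfP : f (n + 1) ∈ P := by
        have h2 : f (n + 1) = (p + t) * r * (q + w) := by rw [hpt, hqw]; exact hr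
        have expand : (p + t) * r * (q + w) =
            p * (r * (q + w)) + t * (r * q) + t * (r * w) := by noncomm_ring
        rw [h2, expand]
        refine P.add_mem (P.add_mem ?_ ?_) ?_
        · exact P.mul_mem_right _ _ hp
        · exact P.mul_mem_left _ _ (P.mul_mem_left _ _ hq)
        · exact Tset_mul_mem hxy ht (Tset_mul_left y r hw)
      exact hPs (n + 1) hfP
  exact hPs 0 (by rw [hf0]; exact h P hprime)

end SN

section Loc

variable {R : Type*} [Ring R] {S : Submonoid R} [OreLocalization.OreSet S]

lemma central_comm (hcen : (S : Set R) ⊆ Set.center R) (u : S) (r : R) :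
    (u : R) * r = r * (u : R) :=
  (Set.mem_center_iff.mp (hcen u.2)).comm r

/-- Multiplication of Ore fractions when the second denominator is central. -/
lemma oreDiv_mul_oreDiv_central (hcen : (S : Set R) ⊆ Set.center R) (a b : R) (u v : S) :
    (a /ₒ u) * (b /ₒ v) = (a * b) /ₒ (v * u) :=
  OreLocalization.oreDiv_mul_char a b u v a v (central_comm hcen v a)

lemma oreDiv_one_eq (hcen : (S : Set R) ⊆ Set.center R) (a : R) (u : S) :
    a * (u : R) /ₒ u = a /ₒ (1 : S) := by
  have h := OreLocalization.expand a (1 : S) (u : R) (by simpa using u.2)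
  rw [h]
  congr 1
  · rw [smul_eq_mul, central_comm hcen u a]
  · ext; simp

lemma oreDiv_one_eq_zero (hcen : (S : Set R) ⊆ Set.center R)
    (hreg : (S : Set R) ⊆ nonZeroDivisors R) {x : R} (h : x /ₒ (1 : S) = 0) : x = 0 := by
  rw [OreLocalization.zero_def, OreLocalization.oreDiv_eq_iff] at h
  obtain ⟨u, v, h1, h2⟩ := h
  simp only [Submonoid.smul_def, smul_eq_mul, mul_zero, mul_one, Submonoid.coe_one] at h1 h2
  rw [← h2] at h1
  have : x * (u : R) = 0 := by rw [← central_comm hcen u x, ← h1]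
  exact (mul_right_mem_nonZeroDivisors_eq_zero_iff (hreg u.2)).mp this

/-- Clearing denominators of an m-sequence in the localization. -/
lemma clear_denom (hcen : (S : Set R) ⊆ Set.center R) (g : ℕ → OreLocalization S R) (a : R)
    (hg0 : g 0 = a /ₒ (1 : S)) (hg : ∀ n, ∃ y, g (n + 1) = g n * y * g n) :
    ∃ b : ℕ → R, b 0 = a ∧ (∀ n, ∃ r, b (n + 1) = b n * r * b n) ∧
      ∀ n, ∃ w : S, g n = b n /ₒ w := by
  choose y hy using hg
  have hrep : ∀ n, ∃ c : R, ∃ v : S, y n = c /ₒ v := fun n => by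
    induction y n using OreLocalization.ind with
    | _ c v => exact ⟨c, v, rfl⟩
  choose c v hcv using hrep
  let p : ℕ → R × S := fun n =>
    Nat.rec (a, (1 : S)) (fun n q => (q.1 * c n * q.1, q.2 * (v n * q.2))) n
  have hrepr : ∀ n, g n = (p n).1 /ₒ (p n).2 := by
    intro n
    induction n with
    | zero => exact hg0
    | succ n ih =>
      have : g (n + 1) = g n * y n * g n := hy n
      rw [this, ih, hcv n]
      rw [oreDiv_mul_oreDiv_central hcen, oreDiv_mul_oreDiv_central hcen]
  exact ⟨fun n => (p n).1, rfl, fun n => ⟨c n, rfl⟩, fun n => ⟨(p n).2, hrepr n⟩⟩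

end Loc

/-- If `S` is a multiplicatively closed set of central regular elements, then the prime radical
of the localization `S⁻¹R` is `{ u⁻¹ a : u ∈ S, a ∈ P(R) }`. -/
theorem primeRadical_oreLocalization (R : Type*) [Ring R] (S : Submonoid R)
    [OreLocalization.OreSet S]
    (hcen : (S : Set R) ⊆ Set.center R) (hreg : (S : Set R) ⊆ nonZeroDivisors R) :
    primeRadical (OreLocalization S R) =
      {x : OreLocalization S R | ∃ u : S, ∃ a ∈ primeRadical R, x = a /ₒ u} := by
  ext x
  simp only [Set.mem_setOf_eq]
  constructor
  · intro hx
    obtain ⟨a, u, rfl⟩ : ∃ (a : R) (u : S), x = a /ₒ u :=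
      OreLocalization.ind (fun r s => ⟨r, s, rfl⟩) x
    refine ⟨u, a, ?_, rfl⟩
    have h1 : a /ₒ (1 : S) ∈ primeRadical (OreLocalization S R) := by
      have heq : a /ₒ (1 : S) = (a /ₒ u) * ((u : R) /ₒ (1 : S)) := by
        rw [oreDiv_mul_oreDiv_central hcen, one_mul, oreDiv_one_eq hcen]
      intro Q hQ
      rw [heq]
      exact Q.mul_mem_right _ _ (hx Q hQ)
    have h2 := primeRadical_snil h1
    apply snil_mem_primeRadical
    intro f hf0 hf
    have hseq : ∀ n, ∃ z, (fun n => f n /ₒ (1 : S)) (n + 1) =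
        (fun n => f n /ₒ (1 : S)) n * z * (fun n => f n /ₒ (1 : S)) n := by
      intro n
      obtain ⟨r, hr⟩ := hf n
      refine ⟨r /ₒ (1 : S), ?_⟩
      show f (n + 1) /ₒ (1 : S) = f n /ₒ (1 : S) * (r /ₒ (1 : S)) * (f n /ₒ (1 : S))
      rw [hr, oreDiv_mul_oreDiv_central hcen, oreDiv_mul_oreDiv_central hcen, one_mul, one_mul]
    obtain ⟨n, hn⟩ := h2 (fun n => f n /ₒ (1 : S)) (by show f 0 /ₒ (1:S) = _; rw [hf0]) hseq
    exact ⟨n, oreDiv_one_eq_zero hcen hreg hn⟩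
  · rintro ⟨u, a, ha, rfl⟩
    have h1 : a /ₒ (1 : S) ∈ primeRadical (OreLocalization S R) := by
      apply snil_mem_primeRadical
      intro g hg0 hg
      obtain ⟨b, hb0, hbseq, hbrep⟩ := clear_denom hcen g a hg0 hg
      obtain ⟨n, hn⟩ := primeRadical_snil ha b hb0 hbseq
      obtain ⟨w, hw⟩ := hbrep n
      exact ⟨n, by rw [hw, hn, OreLocalization.zero_oreDiv]⟩
    intro Q hQ
    have heq : a /ₒ u = ((1 : R) /ₒ u) * (a /ₒ (1 : S)) := by
      rw [oreDiv_mul_oreDiv_central hcen, one_mul, one_mul]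
    rw [heq]
    exact Q.mul_mem_left _ _ (h1 Q hQ)
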